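/- If every fᵢ: ℝ^d → ℝ is μ-strongly convex with H-Lipschitz Hessian, and the points w₁,…,wₙ satisfy ‖wᵢ − x⋆‖ ≤ μ/H for all i (where x⋆ minimizes f = (1/n)∑fᵢ), then the stochastic Newton update x⁺ = [(1/n)∑∇²fᵢ(wᵢ)]⁻¹[(1/n)∑(∇²fᵢ(wᵢ)wᵢ − ∇fᵢ(wᵢ))] satisfies ‖x⁺ − x⋆‖ ≤ μ/(2H) < μ/H; in particular the ball {w : ‖w − x⋆‖ ≤ μ/H} is invariant under the update. -/

import Mathlib

open scoped RealInnerProductSpace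

lemma quad_taylor {E : Type*} [NormedAddCommGroup E] [NormedSpace ℝ E] [CompleteSpace E]
    (g : E → E) (hg : Differentiable ℝ g) (H : ℝ) (hH : 0 ≤ H)
    (hLip : ∀ x y, ‖fderiv ℝ g x - fderiv ℝ g y‖ ≤ H * ‖x - y‖) (a b : E) :
    ‖g b - g a - fderiv ℝ g a (b - a)‖ ≤ H / 2 * ‖b - a‖ ^ 2 := by
  have hcont : Continuous fun x => fderiv ℝ g x := by
    refine (LipschitzWith.of_dist_le_mul (K := H.toNNReal) ?_).continuous
    intro x y
    simpa [dist_eq_norm, Real.coe_toNNReal _ hH] using hLip x y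
  set φ : ℝ → E := fun t => g (a + t • (b - a)) - t • (fderiv ℝ g a (b - a)) with hφdef
  set ψ : ℝ → E := fun t => fderiv ℝ g (a + t • (b - a)) (b - a) - fderiv ℝ g a (b - a) with hψdef
  have hφ : ∀ t : ℝ, HasDerivAt φ (ψ t) t := by
    intro t
    have h1 : HasDerivAt (fun t : ℝ => a + t • (b - a)) (b - a) t := by
      simpa using ((hasDerivAt_id t).smul_const (b - a)).const_add a
    have h2 : HasDerivAt (fun t : ℝ => g (a + t • (b - a)))
        (fderiv ℝ g (a + t • (b - a)) (b - a)) t :=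
      ((hg _).hasFDerivAt).comp_hasDerivAt t h1
    have h3 : HasDerivAt (fun t : ℝ => t • (fderiv ℝ g a (b - a)))
        (fderiv ℝ g a (b - a)) t := by
      simpa using (hasDerivAt_id t).smul_const (fderiv ℝ g a (b - a))
    exact h2.sub h3
  have hψcont : Continuous ψ := by
    apply Continuous.sub _ continuous_const
    exact ((ContinuousLinearMap.apply ℝ E (b - a)).continuous).comp
      (hcont.comp (by continuity))
  have key : (∫ t in (0:ℝ)..1, ψ t) = φ 1 - φ 0 :=
    intervalIntegral.integral_eq_sub_of_hasDerivAt (fun t _ => hφ t)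
      (hψcont.intervalIntegrable 0 1)
  have hφ10 : φ 1 - φ 0 = g b - g a - fderiv ℝ g a (b - a) := by
    simp [hφdef]; abel
  have hbound : ∀ t ∈ Set.Icc (0:ℝ) 1, ‖ψ t‖ ≤ H * ‖b - a‖ ^ 2 * t := by
    intro t ht
    have h1 : ‖ψ t‖ ≤ ‖fderiv ℝ g (a + t • (b - a)) - fderiv ℝ g a‖ * ‖b - a‖ := by
      have := (fderiv ℝ g (a + t • (b - a)) - fderiv ℝ g a).le_opNorm (b - a)
      simpa [hψdef] using this
    have h2 : ‖fderiv ℝ g (a + t • (b - a)) - fderiv ℝ g a‖ ≤ H * (t * ‖b - a‖) := by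
      have := hLip (a + t • (b - a)) a
      simpa [norm_smul, abs_of_nonneg ht.1] using this
    calc ‖ψ t‖ ≤ (H * (t * ‖b - a‖)) * ‖b - a‖ :=
          h1.trans (by gcongr)
      _ = H * ‖b - a‖ ^ 2 * t := by ring
  have hint : IntervalIntegrable (fun t => H * ‖b - a‖ ^ 2 * t) MeasureTheory.volume 0 1 :=
    Continuous.intervalIntegrable (by continuity) 0 1
  have hae : ∀ᵐ t ∂(MeasureTheory.volume.restrict (Set.uIoc (0:ℝ) 1)),
      ‖ψ t‖ ≤ H * ‖b - a‖ ^ 2 * t := by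
    refine Filter.eventually_of_mem (MeasureTheory.self_mem_ae_restrict measurableSet_uIoc) ?_
    intro t ht
    rw [Set.uIoc_of_le (by norm_num : (0:ℝ) ≤ 1)] at ht
    exact hbound t ⟨le_of_lt ht.1, ht.2⟩
  have hnorm : ‖∫ t in (0:ℝ)..1, ψ t‖ ≤ H / 2 * ‖b - a‖ ^ 2 := by
    have h := intervalIntegral.norm_integral_le_abs_of_norm_le (f := ψ) hae hint
    have hval : (∫ t in (0:ℝ)..1, H * ‖b - a‖ ^ 2 * t) = H / 2 * ‖b - a‖ ^ 2 := by
      rw [intervalIntegral.integral_const_mul, integral_id]; ring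
    rw [hval] at h
    calc ‖∫ t in (0:ℝ)..1, ψ t‖ ≤ |H / 2 * ‖b - a‖ ^ 2| := h
      _ = H / 2 * ‖b - a‖ ^ 2 := abs_of_nonneg (by positivity)
  rw [key, hφ10] at hnorm
  exact hnorm

theorem stochastic_newton_ball_invariance
    (d n : ℕ) (hn : 0 < n)
    (f : Fin n → EuclideanSpace ℝ (Fin d) → ℝ)
    (μ H : ℝ) (hμ : 0 < μ) (hH : 0 < H)
    (hf : ∀ i, ContDiff ℝ 2 (f i))
    (hsc : ∀ i, ∀ x v : EuclideanSpace ℝ (Fin d),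
      μ * ‖v‖ ^ 2 ≤ ⟪fderiv ℝ (gradient (f i)) x v, v⟫)
    (hLip : ∀ i, ∀ x y : EuclideanSpace ℝ (Fin d),
      ‖fderiv ℝ (gradient (f i)) x - fderiv ℝ (gradient (f i)) y‖ ≤ H * ‖x - y‖)
    (xstar : EuclideanSpace ℝ (Fin d))
    (hstar : ∑ i, gradient (f i) xstar = 0)
    (w : Fin n → EuclideanSpace ℝ (Fin d))
    (hw : ∀ i, ‖w i - xstar‖ ≤ μ / H)
    (xplus : EuclideanSpace ℝ (Fin d))
    (hstep : ((n : ℝ)⁻¹ • ∑ i, fderiv ℝ (gradient (f i)) (w i)) xplus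
      = (n : ℝ)⁻¹ • ∑ i, (fderiv ℝ (gradient (f i)) (w i) (w i) - gradient (f i) (w i))) :
    ‖xplus - xstar‖ ≤ μ / (2 * H) ∧ μ / (2 * H) < μ / H := by
  -- differentiability of the gradients
  have hgdiff : ∀ i, Differentiable ℝ (gradient (f i)) := by
    intro i
    have h1 : ContDiff ℝ 1 (fderiv ℝ (f i)) :=
      (hf i).fderiv_right (by norm_num)
    have h2 : gradient (f i) =
        fun x => (InnerProductSpace.toDual ℝ (EuclideanSpace ℝ (Fin d))).symm (fderiv ℝ (f i) x) := rfl
    rw [h2]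
    exact fun x => ((InnerProductSpace.toDual ℝ (EuclideanSpace ℝ (Fin d))).symm.differentiableAt).comp x
      (h1.differentiable (by norm_num) x)
  set A : EuclideanSpace ℝ (Fin d) →L[ℝ] EuclideanSpace ℝ (Fin d) := (n : ℝ)⁻¹ • ∑ i, fderiv ℝ (gradient (f i)) (w i) with hA
  set v : EuclideanSpace ℝ (Fin d) := xplus - xstar with hv
  -- A v expression
  have hAv : A v = (n : ℝ)⁻¹ • ∑ i,
      (fderiv ℝ (gradient (f i)) (w i) (w i - xstar)
        - (gradient (f i) (w i) - gradient (f i) xstar)) := by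
    have hAx : A xstar = (n : ℝ)⁻¹ • ∑ i, fderiv ℝ (gradient (f i)) (w i) xstar := by
      simp [hA, ContinuousLinearMap.sum_apply]
    have : A v = A xplus - A xstar := by rw [hv, map_sub]
    rw [this, hstep, hAx, ← smul_sub, ← Finset.sum_sub_distrib]
    have hz : (n : ℝ)⁻¹ • (∑ i, gradient (f i) xstar) = (0 : EuclideanSpace ℝ (Fin d)) := by
      rw [hstar, smul_zero]
    calc ((n : ℝ)⁻¹ • ∑ i, (fderiv ℝ (gradient (f i)) (w i) (w i) - gradient (f i) (w i)
            - fderiv ℝ (gradient (f i)) (w i) xstar))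
        = (n : ℝ)⁻¹ • ∑ i, (fderiv ℝ (gradient (f i)) (w i) (w i) - gradient (f i) (w i)
            - fderiv ℝ (gradient (f i)) (w i) xstar)
          + (n : ℝ)⁻¹ • (∑ i, gradient (f i) xstar) := by rw [hz, add_zero]
      _ = (n : ℝ)⁻¹ • ∑ i,
          (fderiv ℝ (gradient (f i)) (w i) (w i - xstar)
            - (gradient (f i) (w i) - gradient (f i) xstar)) := by
          rw [← smul_add, ← Finset.sum_add_distrib]
          congr 1
          apply Finset.sum_congr rfl
          intro i _
          rw [map_sub]
          abel
  -- norm bound on A v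
  have hAvnorm : ‖A v‖ ≤ μ ^ 2 / (2 * H) := by
    rw [hAv]
    have hterm : ∀ i, ‖fderiv ℝ (gradient (f i)) (w i) (w i - xstar)
        - (gradient (f i) (w i) - gradient (f i) xstar)‖ ≤ μ ^ 2 / (2 * H) := by
      intro i
      have hq := quad_taylor (gradient (f i)) (hgdiff i) H hH.le (hLip i) (w i) xstar
      have heq : gradient (f i) xstar - gradient (f i) (w i)
          - fderiv ℝ (gradient (f i)) (w i) (xstar - w i)
          = fderiv ℝ (gradient (f i)) (w i) (w i - xstar)
            - (gradient (f i) (w i) - gradient (f i) xstar) := by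
        rw [show xstar - w i = -(w i - xstar) by abel, map_neg]
        abel
      rw [heq] at hq
      refine hq.trans ?_
      have h1 : ‖xstar - w i‖ ≤ μ / H := by rw [norm_sub_rev]; exact hw i
      calc H / 2 * ‖xstar - w i‖ ^ 2 ≤ H / 2 * (μ / H) ^ 2 :=
            mul_le_mul_of_nonneg_left (pow_le_pow_left₀ (norm_nonneg _) h1 2) (by positivity)
        _ = μ ^ 2 / (2 * H) := by field_simp
    calc ‖(n : ℝ)⁻¹ • ∑ i, (fderiv ℝ (gradient (f i)) (w i) (w i - xstar)
          - (gradient (f i) (w i) - gradient (f i) xstar))‖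
        = (n : ℝ)⁻¹ * ‖∑ i, (fderiv ℝ (gradient (f i)) (w i) (w i - xstar)
          - (gradient (f i) (w i) - gradient (f i) xstar))‖ := by
          rw [norm_smul, Real.norm_eq_abs, abs_of_nonneg (by positivity)]
      _ ≤ (n : ℝ)⁻¹ * ∑ i, ‖(fderiv ℝ (gradient (f i)) (w i) (w i - xstar)
          - (gradient (f i) (w i) - gradient (f i) xstar))‖ := by
          gcongr
          exact norm_sum_le _ _
      _ ≤ (n : ℝ)⁻¹ * ∑ _i : Fin n, μ ^ 2 / (2 * H) := by
          gcongr with i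
          exact hterm i
      _ = μ ^ 2 / (2 * H) := by
          rw [Finset.sum_const, Finset.card_univ, Fintype.card_fin, nsmul_eq_mul]
          field_simp
  -- strong convexity lower bound
  have hlow : μ * ‖v‖ ^ 2 ≤ ⟪A v, v⟫ := by
    have hexp : ⟪A v, v⟫ = (n : ℝ)⁻¹ * ∑ i, ⟪fderiv ℝ (gradient (f i)) (w i) v, v⟫ := by
      rw [hA]
      simp only [ContinuousLinearMap.smul_apply, ContinuousLinearMap.sum_apply,
        real_inner_smul_left, sum_inner]
    rw [hexp]
    have hsum : (n : ℝ) * (μ * ‖v‖ ^ 2) ≤ ∑ i, ⟪fderiv ℝ (gradient (f i)) (w i) v, v⟫ := by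
      calc (n : ℝ) * (μ * ‖v‖ ^ 2) = ∑ _i : Fin n, μ * ‖v‖ ^ 2 := by
            rw [Finset.sum_const, Finset.card_univ, Fintype.card_fin, nsmul_eq_mul]
        _ ≤ ∑ i, ⟪fderiv ℝ (gradient (f i)) (w i) v, v⟫ :=
            Finset.sum_le_sum fun i _ => hsc i (w i) v
    have hn' : (0 : ℝ) < (n : ℝ) := Nat.cast_pos.mpr hn
    calc μ * ‖v‖ ^ 2 = (n : ℝ)⁻¹ * ((n : ℝ) * (μ * ‖v‖ ^ 2)) := by field_simp
      _ ≤ (n : ℝ)⁻¹ * ∑ i, ⟪fderiv ℝ (gradient (f i)) (w i) v, v⟫ := by gcongr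
  have hupper : ⟪A v, v⟫ ≤ ‖A v‖ * ‖v‖ := real_inner_le_norm _ _
  have hchain : μ * ‖v‖ ^ 2 ≤ μ ^ 2 / (2 * H) * ‖v‖ := by
    calc μ * ‖v‖ ^ 2 ≤ ‖A v‖ * ‖v‖ := hlow.trans hupper
      _ ≤ μ ^ 2 / (2 * H) * ‖v‖ := by gcongr
  constructor
  · rcases eq_or_lt_of_le (norm_nonneg v) with h0 | h0
    · rw [← h0]; positivity
    · have : μ * ‖v‖ ≤ μ ^ 2 / (2 * H) := by
        have := mul_le_mul_of_nonneg_right hchain (le_of_lt (inv_pos.mpr h0))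
        calc μ * ‖v‖ = μ * ‖v‖ ^ 2 * ‖v‖⁻¹ := by field_simp
          _ ≤ μ ^ 2 / (2 * H) * ‖v‖ * ‖v‖⁻¹ := this
          _ = μ ^ 2 / (2 * H) := by field_simp
      calc ‖v‖ = μ⁻¹ * (μ * ‖v‖) := by field_simp
        _ ≤ μ⁻¹ * (μ ^ 2 / (2 * H)) := by gcongr
        _ = μ / (2 * H) := by field_simp
  · exact div_lt_div_of_pos_left hμ hH (by linarith)
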